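/- The formula 𝟏 ⧀ ◇((p ⧀ q) ∧ q) is KbiG-valid on every fuzzy frame whose set of worlds W is finite, but there exists a fuzzy frame on which it is not KbiG-valid. Consequently, the ◇-fragment of the bi-Gödel modal logic of fuzzy frames lacks the finite model property. -/

import Mathlib

/- Truth values: the real unit interval [0,1] with its complete lattice structure
   (so `sInf ∅ = 1` and `sSup ∅ = 0`). -/
instance : Fact ((0:ℝ) ≤ 1) := ⟨zero_le_one⟩

abbrev TV : Type := unitInterval

/-- Gödel implication: `a →G b = 1` if `a ≤ b`, else `b`. -/
noncomputable def gimp (a b : TV) : TV := if a ≤ b then 1 else b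

/-- Gödel coimplication: `a ⧀G b = 0` if `a ≤ b`, else `a`. -/
noncomputable def gcoimp (a b : TV) : TV := if a ≤ b then 0 else a

/-- ¬-free formulas: the language `biL_{□,◇}` over the countable variable set `ℕ`. -/
inductive FormulaB : Type
  | var : ℕ → FormulaB
  | and : FormulaB → FormulaB → FormulaB
  | or : FormulaB → FormulaB → FormulaB
  | imp : FormulaB → FormulaB → FormulaB
  | coimp : FormulaB → FormulaB → FormulaB
  | box : FormulaB → FormulaB
  | dia : FormulaB → FormulaB

/-- KbiG valuation on a fuzzy frame `(W, R)` with `R : W × W → [0,1]`: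
`v(□φ,w) = inf_{w'} (R(w,w') →G v(φ,w'))`, `v(◇φ,w) = sup_{w'} min(R(w,w'), v(φ,w'))`. -/
noncomputable def fval {W : Type} (R : W → W → TV) (v : ℕ → W → TV) :
    FormulaB → W → TV
  | .var p, w => v p w
  | .and φ ψ, w => fval R v φ w ⊓ fval R v ψ w
  | .or φ ψ, w => fval R v φ w ⊔ fval R v ψ w
  | .imp φ ψ, w => gimp (fval R v φ w) (fval R v ψ w)
  | .coimp φ ψ, w => gcoimp (fval R v φ w) (fval R v ψ w)
  | .box φ, w => ⨅ w', gimp (R w w') (fval R v φ w')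
  | .dia φ, w => ⨆ w', (R w w') ⊓ fval R v φ w'

/-- `𝟏 := p → p`. -/
def bone : FormulaB := .imp (.var 0) (.var 0)

/-- `𝟎 := p ⧀ p`. -/
def bzero : FormulaB := .coimp (.var 0) (.var 0)

/-- Gödel negation `∼φ := φ → 𝟎`. -/
def bnegG (φ : FormulaB) : FormulaB := .imp φ bzero

/-- Baaz delta `Δτ := ∼(𝟏 ⧀ τ)`. -/
def bDelta (τ : FormulaB) : FormulaB := bnegG (.coimp bone τ)

/-- The formula `𝟏 ⧀ ◇((p ⧀ q) ∧ q)` with `p := var 0`, `q := var 1`. -/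
def phiFin : FormulaB := .coimp bone (.dia (.and (.coimp (.var 0) (.var 1)) (.var 1)))

lemma tv_zero_lt_one : (0 : TV) < 1 := by
  rw [← Subtype.coe_lt_coe]; norm_num

lemma tv_zero_ne_one : (0 : TV) ≠ 1 := ne_of_lt tv_zero_lt_one

/-- `𝟏 ⧀ ◇((p ⧀ q) ∧ q)` is KbiG-valid on every fuzzy frame with finitely many
worlds, but fails on some fuzzy frame: the ◇-fragment over fuzzy frames lacks the FMP. -/
theorem stmt5 :
    (∀ (W : Type), Nonempty W → Finite W → ∀ (R : W → W → TV) (v : ℕ → W → TV) (w : W),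
        fval R v phiFin w = 1) ∧
    (∃ (W : Type) (_ : Nonempty W) (R : W → W → TV) (v : ℕ → W → TV) (w : W),
        fval R v phiFin w ≠ 1) := by
  constructor
  · intro W _ _ R v w
    set ψ : FormulaB := .and (.coimp (.var 0) (.var 1)) (.var 1) with hψ
    have hterm : ∀ w', R w w' ⊓ fval R v ψ w' < 1 := by
      intro w'
      have h : fval R v ψ w' < 1 := by
        simp only [hψ, fval, gcoimp]
        by_cases v 0 w' ≤ v 1 w' <;> simp only [*, ↓reduceIte, not_false_eq_true]
        · exact lt_of_le_of_lt inf_le_left tv_zero_lt_one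
        · rename_i h
          exact lt_of_le_of_lt inf_le_right
            (lt_of_lt_of_le (not_le.mp h) (v 0 w').2.2)
      exact lt_of_le_of_lt inf_le_right h
    have hD : (⨆ w', R w w' ⊓ fval R v ψ w') < 1 := by
      obtain ⟨i, hi⟩ := Finite.exists_max (fun w' => R w w' ⊓ fval R v ψ w')
      have heq : (⨆ w', R w w' ⊓ fval R v ψ w') = R w i ⊓ fval R v ψ i :=
        le_antisymm (iSup_le hi) (le_iSup (fun w' => R w w' ⊓ fval R v ψ w') i)
      rw [heq]; exact hterm i
    have hb : fval R v bone w = 1 := by simp [bone, fval, gimp]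
    show gcoimp (fval R v bone w) (fval R v (.dia ψ) w) = 1
    rw [hb]
    show gcoimp 1 (⨆ w', R w w' ⊓ fval R v ψ w') = 1
    rw [gcoimp, if_neg (not_le.mpr hD)]
  · refine ⟨TV, ⟨1⟩, fun _ _ => 1, fun n w => if n = 0 then 1 else w, 1, ?_⟩
    set ψ : FormulaB := .and (.coimp (.var 0) (.var 1)) (.var 1) with hψ
    set v : ℕ → TV → TV := fun n w => if n = 0 then 1 else w with hv
    set R : TV → TV → TV := fun _ _ => 1 with hR
    have hterm : ∀ t : TV, t < 1 → R 1 t ⊓ fval R v ψ t = t := by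
      intro t ht
      have h10 : ¬((1:TV) ≤ t) := not_le.mpr ht
      simp only [hψ, fval, gcoimp, hv, hR]
      simp [h10, inf_eq_right.mpr ht.le, inf_eq_right.mpr unitInterval.le_one']
    have hD : (⨆ t, R 1 t ⊓ fval R v ψ t) = 1 := by
      refine le_antisymm unitInterval.le_one' ?_
      by_contra h
      obtain ⟨t, h1, h2⟩ := exists_between (not_le.mp h)
      have := le_iSup (fun t => R 1 t ⊓ fval R v ψ t) t
      rw [hterm t h2] at this
      exact absurd this (not_le.mpr h1)
    have hb : fval R v bone 1 = 1 := by simp [bone, fval, gimp]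
    show fval R v phiFin 1 ≠ 1
    have : fval R v phiFin 1 = gcoimp (fval R v bone 1) (⨆ t, R 1 t ⊓ fval R v ψ t) := rfl
    rw [this, hb, hD, gcoimp, if_pos le_rfl]
    exact tv_zero_ne_one
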